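/- Let n ≥ 2, 1 ≤ m ≤ n with 2m ≤ n. For every ε > 0 there exist r, s > 0 with r² + s² = 1 such that, setting λ = s/r, μ = -r/s, |A|² = m·λ² + (n-m)·μ², and H = m·λ + (n-m)·μ, one has |A|² - H²/(n-m) - 2m ≤ ε. -/

import Mathlib

lemma key_id (n m : ℕ) (hm : 1 ≤ m) (hmn : 2 * m ≤ n) (r s : ℝ)
    (hr : 0 < r) (hs : 0 < s) (hrs : r ^ 2 + s ^ 2 = 1) :
    (m * (s / r) ^ 2 + (n - m : ℝ) * (-(r / s)) ^ 2)
      - (m * (s / r) + (n - m : ℝ) * (-(r / s))) ^ 2 / (n - m : ℝ)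
      - 2 * m = (m * ((n : ℝ) - 2 * m) / ((n : ℝ) - m)) * (s / r) ^ 2 := by
  have hmn' : (m : ℝ) < n := by
    have : m < n := by omega
    exact_mod_cast this
  have hnm : (0 : ℝ) < (n : ℝ) - m := by linarith
  field_simp
  ring_nf

/-- Sharpness of the quadratic pinching condition: the hypersurfaces
`S^m(r) × S^{n-m}(s)` of the unit sphere come arbitrarily close to equality. -/
theorem stmt1 (n m : ℕ) (hn : 2 ≤ n) (hm : 1 ≤ m) (hmn : 2 * m ≤ n)
    (ε : ℝ) (hε : 0 < ε) :
    ∃ r s : ℝ, 0 < r ∧ 0 < s ∧ r ^ 2 + s ^ 2 = 1 ∧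
      (m * (s / r) ^ 2 + (n - m : ℝ) * (-(r / s)) ^ 2)
        - (m * (s / r) + (n - m : ℝ) * (-(r / s))) ^ 2 / (n - m : ℝ)
        - 2 * m ≤ ε := by
  have hn0 : (0 : ℝ) < n := by positivity
  set δ : ℝ := min (1/2) (ε / (2 * n)) with hδdef
  have hδpos : 0 < δ := lt_min (by norm_num) (by positivity)
  have hδle : δ ≤ 1/2 := min_le_left _ _
  have hδle' : δ ≤ ε / (2 * n) := min_le_right _ _
  refine ⟨Real.sqrt (1 - δ), Real.sqrt δ, Real.sqrt_pos.2 (by linarith),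
    Real.sqrt_pos.2 hδpos, ?_, ?_⟩
  · rw [Real.sq_sqrt (by linarith), Real.sq_sqrt hδpos.le]; ring
  · have hr : 0 < Real.sqrt (1 - δ) := Real.sqrt_pos.2 (by linarith)
    have hs : 0 < Real.sqrt δ := Real.sqrt_pos.2 hδpos
    have hrs : Real.sqrt (1 - δ) ^ 2 + Real.sqrt δ ^ 2 = 1 := by
      rw [Real.sq_sqrt (by linarith), Real.sq_sqrt hδpos.le]; ring
    rw [key_id n m hm hmn _ _ hr hs hrs]
    have hmn' : (m : ℝ) < n := by exact_mod_cast (by omega : m < n)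
    have hnm : (0 : ℝ) < (n : ℝ) - m := by linarith
    have hcoef : (m : ℝ) * ((n : ℝ) - 2 * m) / ((n : ℝ) - m) ≤ n := by
      rw [div_le_iff₀ hnm]
      have h1 : (m : ℝ) ≤ (n : ℝ) - m := by
        have : (2 * m : ℝ) ≤ n := by exact_mod_cast hmn
        linarith
      have h2 : (0 : ℝ) ≤ (n : ℝ) - 2 * m := by
        have : (2 * m : ℝ) ≤ n := by exact_mod_cast hmn
        linarith
      nlinarith [hn0, Nat.cast_nonneg (α := ℝ) m]
    have hsq : (Real.sqrt δ / Real.sqrt (1 - δ)) ^ 2 ≤ 2 * δ := by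
      rw [div_pow, Real.sq_sqrt hδpos.le, Real.sq_sqrt (by linarith : (0:ℝ) ≤ 1 - δ)]
      rw [div_le_iff₀ (by linarith)]
      nlinarith
    have hcoef0 : (0 : ℝ) ≤ (m : ℝ) * ((n : ℝ) - 2 * m) / ((n : ℝ) - m) := by
      have h2 : (0 : ℝ) ≤ (n : ℝ) - 2 * m := by
        have : (2 * m : ℝ) ≤ n := by exact_mod_cast hmn
        linarith
      positivity
    calc (m : ℝ) * ((n : ℝ) - 2 * m) / ((n : ℝ) - m) * (Real.sqrt δ / Real.sqrt (1 - δ)) ^ 2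
        ≤ n * (2 * δ) := by
          apply mul_le_mul hcoef hsq (by positivity) hn0.le
      _ ≤ n * (2 * (ε / (2 * n))) := by nlinarith
      _ = ε := by field_simp
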